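/- Let H, Δ, Σ be groups with injective homomorphisms i : H → Δ and j : H → Σ, and let G = Δ *_H Σ be the amalgamated free product (the pushout of i and j), with canonical injective homomorphisms ι_Δ : Δ → G, ι_Σ : Σ → G, and ι_H = ι_Δ ∘ i = ι_Σ ∘ j : H → G. Then for every g ∈ G with g ∉ ι_Σ(Σ), there exists k ∈ G such that g·ι_Σ(Σ)·g⁻¹ ∩ ι_Σ(Σ) ⊆ k·ι_H(H)·k⁻¹; i.e. the intersection of ι_Σ(Σ) with any conjugate of itself by an element outside of it is contained in a conjugate of the amalgamated subgroup. -/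

import Mathlib

open Function Subgroup

section AmalgamAux

variable {H : Type*} [Group H] {G : Bool → Type*} [∀ b, Group (G b)]

namespace AmalgamAux

variable (φ : ∀ b, H →* G b)

/-- The product in the pushout of a list of letters. -/
def lprod (l : List (Σ b, G b)) : Monoid.PushoutI φ :=
  (l.map fun p => Monoid.PushoutI.of (φ := φ) p.1 p.2).prod

@[simp] lemma lprod_nil : lprod φ ([] : List (Σ b, G b)) = 1 := rfl

@[simp] lemma lprod_cons (p : Σ b, G b) (l : List (Σ b, G b)) :
    lprod φ (p :: l) = Monoid.PushoutI.of (φ := φ) p.1 p.2 * lprod φ l := by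
  simp [lprod]

@[simp] lemma lprod_append (l₁ l₂ : List (Σ b, G b)) :
    lprod φ (l₁ ++ l₂) = lprod φ l₁ * lprod φ l₂ := by simp [lprod]

lemma ofCoprodI_word_prod (w : Monoid.CoprodI.Word G) :
    Monoid.PushoutI.ofCoprodI (φ := φ) w.prod = lprod φ w.toList := by
  rw [Monoid.CoprodI.Word.prod, map_list_prod, List.map_map, lprod]
  congr 1

/-- reverse-inverse of a list of letters -/
def mir (l : List (Σ b, G b)) : List (Σ b, G b) :=
  l.reverse.map fun p => ⟨p.1, p.2⁻¹⟩

@[simp] lemma mir_nil : mir ([] : List (Σ b, G b)) = [] := rfl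

lemma mir_cons (p : Σ b, G b) (l : List (Σ b, G b)) :
    mir (p :: l) = mir l ++ [⟨p.1, p.2⁻¹⟩] := by simp [mir]

@[simp] lemma lprod_mir (l : List (Σ b, G b)) :
    lprod φ (mir l) = (lprod φ l)⁻¹ := by
  induction l with
  | nil => simp
  | cons p l ih => rw [mir_cons]; simp [ih, mul_comm]

@[simp] lemma mir_map_fst (l : List (Σ b, G b)) :
    (mir l).map Sigma.fst = (l.map Sigma.fst).reverse := by
  simp [mir, List.map_map, List.map_reverse]

lemma mem_mir {p : Σ b, G b} {l : List (Σ b, G b)} (hp : p ∈ mir l) :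
    ∃ q ∈ l, p = ⟨q.1, q.2⁻¹⟩ := by
  simp only [mir, List.mem_map, List.mem_reverse] at hp
  obtain ⟨q, hq, rfl⟩ := hp
  exact ⟨q, hq, rfl⟩

variable {φ}

lemma britton (hφ : ∀ b, Function.Injective (φ b)) (w : Monoid.CoprodI.Word G)
    (hw : Monoid.PushoutI.Reduced φ w) (hlen : 2 ≤ w.toList.length) (b : Bool) :
    Monoid.PushoutI.ofCoprodI (φ := φ) w.prod ∉ (Monoid.PushoutI.of (φ := φ) b).range := by
  rintro ⟨a, ha⟩
  by_cases hr : a ∈ (φ b).range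
  · obtain ⟨h, rfl⟩ := hr
    have hmem : Monoid.PushoutI.ofCoprodI (φ := φ) w.prod ∈
        (Monoid.PushoutI.base φ).range :=
      ⟨h, by rw [← ha, Monoid.PushoutI.of_apply_eq_base]⟩
    have := hw.eq_empty_of_mem_range hφ hmem
    rw [this] at hlen
    simp [Monoid.CoprodI.Word.empty] at hlen
  · have ha1 : a ≠ 1 := by rintro rfl; exact hr (one_mem _)
    let w₂ : Monoid.CoprodI.Word G :=
      ⟨[⟨b, a⟩], by simpa using ha1, List.isChain_singleton _⟩
    have hw₂ : Monoid.PushoutI.Reduced φ w₂ := by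
      intro p hp
      simp only [w₂, List.mem_singleton] at hp
      subst hp
      exact hr
    obtain ⟨d⟩ := Monoid.PushoutI.NormalWord.transversal_nonempty φ hφ
    obtain ⟨n₁, hp₁, hm₁⟩ := hw.exists_normalWord_prod_eq d
    obtain ⟨n₂, hp₂, hm₂⟩ := hw₂.exists_normalWord_prod_eq d
    have hprod₂ : Monoid.PushoutI.ofCoprodI (φ := φ) w₂.prod =
        Monoid.PushoutI.of (φ := φ) b a := by
      simp [Monoid.CoprodI.Word.prod, w₂, Monoid.PushoutI.ofCoprodI_of]
    have h12 : n₁ = n₂ :=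
      Monoid.PushoutI.NormalWord.prod_injective
        (by rw [hp₁, hp₂, ← ha, hprod₂])
    rw [h12, hm₂] at hm₁
    have := congrArg List.length hm₁
    simp [w₂] at this
    omega

lemma letter_not_mem_range {d : Monoid.PushoutI.NormalWord.Transversal φ}
    (w : Monoid.PushoutI.NormalWord d) :
    ∀ p ∈ w.toList, p.2 ∉ (φ p.1).range := by
  rintro ⟨i, a⟩ hp ⟨h, hh⟩
  simp only at hh
  rw [← hh] at hp
  have h2 : φ i h ∈ d.set i := w.normalized i _ hp
  have h1 : φ i h ∈ ((φ i).range : Set (G i)) := ⟨h, rfl⟩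
  have hne : φ i h ≠ 1 := w.ne_one _ hp
  have hinj := (d.compl i).1
  have : ((⟨⟨φ i h, h1⟩, ⟨1, d.one_mem i⟩⟩ : ((φ i).range : Set (G i)) × (d.set i)))
      = ⟨⟨1, (Subgroup.one_mem _ : (1:G i) ∈ (φ i).range)⟩, ⟨φ i h, h2⟩⟩ := by
    apply hinj
    simp
  exact hne (by simpa using congrArg (fun q => (q.1 : G i)) this)

/-- Key combinatorial lemma: conjugating an element of `G false` not in the image of the
base group by a reduced word ending (on the right) in a `G true` letter gives an element
outside the image of `G false`. -/
lemma conj_not_mem (hφ : ∀ b, Function.Injective (φ b))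
    (l : List (Σ b, G b)) (hne : l ≠ [])
    (hlast : (l.getLast hne).1 = true)
    (hchain : l.Chain' fun p q => p.1 ≠ q.1)
    (hred : ∀ p ∈ l, p.2 ∉ (φ p.1).range)
    (x : G false) (hx : x ∉ (φ false).range) :
    lprod φ l * Monoid.PushoutI.of (φ := φ) false x * (lprod φ l)⁻¹ ∉
      (Monoid.PushoutI.of (φ := φ) false).range := by
  intro hmem
  set L : List (Σ b, G b) := l ++ ⟨false, x⟩ :: mir l with hLdef
  have hredL : ∀ p ∈ L, p.2 ∉ (φ p.1).range := by
    intro p hp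
    rw [hLdef, List.mem_append, List.mem_cons] at hp
    rcases hp with hp | hp | hp
    · exact hred p hp
    · subst hp; exact hx
    · obtain ⟨q, hq, rfl⟩ := mem_mir hp
      simpa [Subgroup.inv_mem_iff] using hred q hq
  have hne1 : ∀ p ∈ L, p.2 ≠ (1 : G p.1) := by
    intro p hp h1
    exact hredL p hp (h1 ▸ one_mem _)
  -- chain condition
  have hFne : l.map Sigma.fst ≠ [] := by simpa using hne
  have hlast' : (l.map Sigma.fst).getLast hFne = true := by
    rw [List.getLast_map]
    exact hlast
  have hchainF : (l.map Sigma.fst).Chain' (· ≠ ·) := (List.isChain_map _).2 hchain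
  have hlast? : (l.map Sigma.fst).getLast? = some true := by
    rw [List.getLast?_eq_getLast hFne, hlast']
  have hchainL : (L.map Sigma.fst).Chain' (· ≠ ·) := by
    have hmapL : L.map Sigma.fst =
        l.map Sigma.fst ++ false :: (l.map Sigma.fst).reverse := by
      simp [hLdef]
    rw [hmapL, List.Chain', List.isChain_append]
    refine ⟨hchainF, ?_, ?_⟩
    · rw [List.isChain_cons]
      constructor
      · intro y hy
        rw [List.head?_reverse, hlast?] at hy
        simp at hy
        subst hy
        simp
      · rw [List.isChain_reverse]
        exact List.IsChain.imp (fun a b h => h.symm) hchainF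
    · intro a ha b hb
      rw [hlast?] at ha
      simp at ha hb
      subst ha; subst hb
      simp
  have hchainL' : L.Chain' fun p q => p.1 ≠ q.1 := (List.isChain_map _).1 hchainL
  let W : Monoid.CoprodI.Word G := ⟨L, hne1, hchainL'⟩
  have hredW : Monoid.PushoutI.Reduced φ W := hredL
  have hlenW : 2 ≤ W.toList.length := by
    have : l.length ≠ 0 := by simpa using hne
    simp only [W, hLdef, List.length_append, List.length_cons]
    omega
  refine britton hφ W hredW hlenW false ?_
  rw [ofCoprodI_word_prod]
  show lprod φ L ∈ _
  rw [hLdef]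
  simpa [mul_assoc] using hmem

end AmalgamAux

end AmalgamAux

open AmalgamAux in
/-- in an amalgamated free product `G = Δ *_H Σ` (the pushout of injective
homomorphisms `i : H → Δ` and `j : H → Σ`), for every `g ∉ ι_Σ(Σ)` there is `k ∈ G` with
`g ι_Σ(Σ) g⁻¹ ∩ ι_Σ(Σ) ⊆ k ι_H(H) k⁻¹`.  Here the two factors are encoded as the family
`G : Bool → Type*`, with `Δ = G true` and `Σ = G false`, and `Δ *_H Σ = Monoid.PushoutI φ`. -/
theorem amalgam_conj_inter_subset_conj_base {H : Type*} [Group H]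
    {G : Bool → Type*} [∀ b, Group (G b)]
    (φ : ∀ b, H →* G b) (hφ : ∀ b, Function.Injective (φ b)) :
    ∀ g : Monoid.PushoutI φ, g ∉ (Monoid.PushoutI.of (φ := φ) false).range →
      ∃ k : Monoid.PushoutI φ,
        Subgroup.map (MulAut.conj g).toMonoidHom (Monoid.PushoutI.of (φ := φ) false).range ⊓
            (Monoid.PushoutI.of (φ := φ) false).range ≤
          Subgroup.map (MulAut.conj k).toMonoidHom (Monoid.PushoutI.base φ).range := by
  intro g hg
  classical
  obtain ⟨d⟩ := Monoid.PushoutI.NormalWord.transversal_nonempty φ hφ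
  set w : Monoid.PushoutI.NormalWord d :=
    Monoid.PushoutI.NormalWord.equiv g with hwdef
  have hgw : w.prod = g := (Monoid.PushoutI.NormalWord.equiv).left_inv g
  have hbase : ∀ h : H, Monoid.PushoutI.base φ h ∈
      (Monoid.PushoutI.of (φ := φ) false).range :=
    fun h => ⟨φ false h, Monoid.PushoutI.of_apply_eq_base φ false h⟩
  have hprodw : g = Monoid.PushoutI.base φ w.head * lprod φ w.toList := by
    rw [← hgw, Monoid.PushoutI.NormalWord.prod, ofCoprodI_word_prod]
  have hred := letter_not_mem_range w
  have hchain : w.toList.Chain' fun p q => p.1 ≠ q.1 := w.chain_ne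
  rcases List.eq_nil_or_concat w.toList with h0 | ⟨l', p, hL⟩
  · exfalso
    apply hg
    rw [hprodw, h0]
    simpa using hbase w.head
  · rw [List.concat_eq_append] at hL
    rcases p with ⟨pb, s⟩
    cases pb
    · -- last letter in G false
      have hne' : l' ≠ [] := by
        rintro rfl
        apply hg
        rw [hprodw, hL]
        simp only [List.nil_append, lprod_cons, lprod_nil, mul_one]
        exact mul_mem (hbase w.head) ⟨s, rfl⟩
      have hlast' : (l'.getLast hne').1 = true := by
        rw [hL] at hchain
        rw [List.Chain', List.isChain_append] at hchain
        have := hchain.2.2 (l'.getLast hne') (by rw [List.getLast?_eq_getLast hne']; exact Option.mem_some_iff.mpr rfl)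
          ⟨false, s⟩ rfl
        revert this
        cases (l'.getLast hne').1 <;> simp
      have hchain' : l'.Chain' fun p q => p.1 ≠ q.1 := by
        rw [hL, List.Chain', List.isChain_append] at hchain
        exact hchain.1
      have hred' : ∀ p ∈ l', p.2 ∉ (φ p.1).range := fun p hp =>
        hred p (by rw [hL]; exact List.mem_append_left _ hp)
      refine ⟨g * (Monoid.PushoutI.of (φ := φ) false s)⁻¹, ?_⟩
      intro y hy
      rw [Subgroup.mem_inf] at hy
      obtain ⟨hy1, hy2⟩ := hy
      rw [Subgroup.mem_map] at hy1
      obtain ⟨x, hxmem, hxy⟩ := hy1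
      obtain ⟨x₀, rfl⟩ := hxmem
      rw [MulEquiv.coe_toMonoidHom, MulAut.conj_apply] at hxy
      set x₁ : G false := s * x₀ * s⁻¹ with hx₁def
      have hofx₁ : Monoid.PushoutI.of (φ := φ) false x₁ =
          Monoid.PushoutI.of (φ := φ) false s * Monoid.PushoutI.of (φ := φ) false x₀ *
            (Monoid.PushoutI.of (φ := φ) false s)⁻¹ := by
        rw [hx₁def]; simp [map_mul]
      by_cases hx1 : x₁ ∈ (φ false).range
      · obtain ⟨h₁, hh₁⟩ := hx1
        rw [Subgroup.mem_map]
        refine ⟨Monoid.PushoutI.base φ h₁, ⟨h₁, rfl⟩, ?_⟩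
        rw [MulEquiv.coe_toMonoidHom, MulAut.conj_apply,
          ← Monoid.PushoutI.of_apply_eq_base φ false h₁, hh₁, hofx₁, ← hxy]
        group
      · exfalso
        refine conj_not_mem hφ l' hne' hlast' hchain' hred' x₁ hx1 ?_
        have hkey : lprod φ l' * Monoid.PushoutI.of (φ := φ) false x₁ * (lprod φ l')⁻¹ =
            (Monoid.PushoutI.base φ w.head)⁻¹ * y * Monoid.PushoutI.base φ w.head := by
          rw [← hxy, hprodw, hL, hofx₁]
          simp only [lprod_append, lprod_cons, lprod_nil, mul_one]
          group
        rw [hkey]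
        exact mul_mem (mul_mem (inv_mem (hbase _)) hy2) (hbase _)
    · -- last letter in G true
      have hne' : w.toList ≠ [] := by rw [hL]; simp
      have hlast' : (w.toList.getLast hne').1 = true := by
        have h1 : w.toList.getLast? = some ⟨true, s⟩ := by rw [hL]; simp
        have h2 : w.toList.getLast? = some (w.toList.getLast hne') :=
          List.getLast?_eq_getLast hne'
        rw [h1] at h2
        rw [← Option.some_injective _ h2]
      refine ⟨g, ?_⟩
      intro y hy
      rw [Subgroup.mem_inf] at hy
      obtain ⟨hy1, hy2⟩ := hy
      rw [Subgroup.mem_map] at hy1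
      obtain ⟨x, hxmem, hxy⟩ := hy1
      obtain ⟨x₀, rfl⟩ := hxmem
      rw [MulEquiv.coe_toMonoidHom, MulAut.conj_apply] at hxy
      by_cases hx0 : x₀ ∈ (φ false).range
      · obtain ⟨h₀, hh₀⟩ := hx0
        rw [Subgroup.mem_map]
        refine ⟨Monoid.PushoutI.base φ h₀, ⟨h₀, rfl⟩, ?_⟩
        rw [MulEquiv.coe_toMonoidHom, MulAut.conj_apply,
          ← Monoid.PushoutI.of_apply_eq_base φ false h₀, hh₀, hxy]
      · exfalso
        refine conj_not_mem hφ w.toList hne' hlast' hchain hred x₀ hx0 ?_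
        have hkey : lprod φ w.toList * Monoid.PushoutI.of (φ := φ) false x₀ *
              (lprod φ w.toList)⁻¹ =
            (Monoid.PushoutI.base φ w.head)⁻¹ * y * Monoid.PushoutI.base φ w.head := by
          rw [← hxy, hprodw]
          group
        rw [hkey]
        exact mul_mem (mul_mem (inv_mem (hbase _)) hy2) (hbase _)
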